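/- (Clarkson inequality, part 2) Let 1 < p < ∞, let p′ = p/(p−1) be the conjugate index, and set r = min(p, p′). Then for all x, y ∈ ℓ_p: 2^{r−1}(‖x‖_p^r + ‖y‖_p^r) ≤ ‖x+y‖_p^r + ‖x−y‖_p^r ≤ 2(‖x‖_p^r + ‖y‖_p^r). -/

import Mathlib

open scoped ENNReal

namespace ClarksonAux
open Real Set

/-- Two-term Hölder via weighted AM-GM. -/
lemma holder2 {a b : ℝ} (ha : 0 ≤ a) (hb : 0 ≤ b) (hab : a + b = 1)
    {u1 v1 u2 v2 : ℝ} (hu1 : 0 ≤ u1) (hv1 : 0 ≤ v1) (hu2 : 0 ≤ u2) (hv2 : 0 ≤ v2) :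
    u1 ^ a * v1 ^ b + u2 ^ a * v2 ^ b ≤ (u1 + u2) ^ a * (v1 + v2) ^ b := by
  rcases eq_or_lt_of_le ha with rfl | ha'
  · simp only [zero_add] at hab; subst hab
    simp [Real.rpow_zero, Real.rpow_one]
  rcases eq_or_lt_of_le hb with rfl | hb'
  · have : a = 1 := by linarith
    subst this; simp [Real.rpow_zero, Real.rpow_one]
  set U := u1 + u2 with hU
  set V := v1 + v2 with hV
  have hU0 : 0 ≤ U := by positivity
  have hV0 : 0 ≤ V := by positivity
  rcases eq_or_lt_of_le hU0 with hUz | hUpos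
  · have h1 : u1 = 0 := by linarith [hu1, hu2, hU.symm ▸ hUz.symm]
    have h2 : u2 = 0 := by linarith [hu1, hu2, hU.symm ▸ hUz.symm]
    simp [h1, h2, Real.zero_rpow (ne_of_gt ha'), ← hUz]
  rcases eq_or_lt_of_le hV0 with hVz | hVpos
  · have h1 : v1 = 0 := by linarith [hv1, hv2, hV.symm ▸ hVz.symm]
    have h2 : v2 = 0 := by linarith [hv1, hv2, hV.symm ▸ hVz.symm]
    simp [h1, h2, Real.zero_rpow (ne_of_gt hb'), ← hVz]
  have k1 := Real.geom_mean_le_arith_mean2_weighted ha hb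
    (div_nonneg hu1 hU0) (div_nonneg hv1 hV0) hab
  have k2 := Real.geom_mean_le_arith_mean2_weighted ha hb
    (div_nonneg hu2 hU0) (div_nonneg hv2 hV0) hab
  have e1 : (u1 / U) ^ a * (v1 / V) ^ b = (u1 ^ a * v1 ^ b) / (U ^ a * V ^ b) := by
    rw [Real.div_rpow hu1 hU0, Real.div_rpow hv1 hV0]; ring
  have e2 : (u2 / U) ^ a * (v2 / V) ^ b = (u2 ^ a * v2 ^ b) / (U ^ a * V ^ b) := by
    rw [Real.div_rpow hu2 hU0, Real.div_rpow hv2 hV0]; ring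
  have hsum : (u1 ^ a * v1 ^ b + u2 ^ a * v2 ^ b) / (U ^ a * V ^ b) ≤ 1 := by
    rw [add_div, ← e1, ← e2]
    calc (u1 / U) ^ a * (v1 / V) ^ b + (u2 / U) ^ a * (v2 / V) ^ b
        ≤ (a * (u1 / U) + b * (v1 / V)) + (a * (u2 / U) + b * (v2 / V)) := add_le_add k1 k2
      _ = a * ((u1 + u2) / U) + b * ((v1 + v2) / V) := by ring
      _ = 1 := by rw [← hU, ← hV, div_self (ne_of_gt hUpos), div_self (ne_of_gt hVpos)]; linarith
  have hpos : 0 < U ^ a * V ^ b := by positivity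
  calc u1 ^ a * v1 ^ b + u2 ^ a * v2 ^ b
      = ((u1 ^ a * v1 ^ b + u2 ^ a * v2 ^ b) / (U ^ a * V ^ b)) * (U ^ a * V ^ b) := by
        field_simp
    _ ≤ 1 * (U ^ a * V ^ b) := by
        exact mul_le_mul_of_nonneg_right hsum hpos.le
    _ = U ^ a * V ^ b := one_mul _

/-- subadditivity of rpow for exponent ≤ 1, real version -/
lemma rpow_add_le_add_rpow' {x y w : ℝ} (hx : 0 ≤ x) (hy : 0 ≤ y) (hw0 : 0 ≤ w) (hw1 : w ≤ 1) :
    (x + y) ^ w ≤ x ^ w + y ^ w := by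
  have := NNReal.rpow_add_le_add_rpow x.toNNReal y.toNNReal hw0 hw1
  have h := NNReal.coe_le_coe.2 this
  rw [NNReal.coe_add, NNReal.coe_rpow, NNReal.coe_rpow, NNReal.coe_rpow] at h
  rwa [Real.coe_toNNReal _ hx, Real.coe_toNNReal _ hy, ← Real.toNNReal_add hx hy,
    Real.coe_toNNReal _ (by positivity)] at h


lemma sq_rpow_half (c : ℝ) {p : ℝ} (hp : 0 ≤ p) : ((c ^ 2 : ℝ)) ^ (p / 2) = |c| ^ p := by
  rw [← sq_abs, ← Real.rpow_natCast |c| 2, ← Real.rpow_mul (abs_nonneg c)]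
  congr 1; ring

/-- easy scalar Clarkson: for 1 ≤ p ≤ 2 -/
lemma easy_scalar {p : ℝ} (hp1 : 1 ≤ p) (hp2 : p ≤ 2) (a b : ℝ) :
    |a + b| ^ p + |a - b| ^ p ≤ 2 * (|a| ^ p + |b| ^ p) := by
  have hp0 : 0 ≤ p := by linarith
  have hw1 : 0 ≤ p / 2 := by linarith
  have hw2 : (0:ℝ) ≤ 1 - p / 2 := by linarith
  have hw3 : p / 2 + (1 - p / 2) = 1 := by ring
  have h1 : |a + b| ^ p + |a - b| ^ p
      = ((a+b)^2) ^ (p/2) * (1:ℝ) ^ (1 - p/2) + ((a-b)^2) ^ (p/2) * (1:ℝ) ^ (1 - p/2) := by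
    rw [Real.one_rpow, sq_rpow_half _ hp0, sq_rpow_half _ hp0]; ring
  rw [h1]
  have h2 := holder2 hw1 hw2 hw3 (sq_nonneg (a+b)) zero_le_one (sq_nonneg (a-b)) zero_le_one
  refine h2.trans ?_
  have e : (a+b)^2 + (a-b)^2 = 2 * (a^2 + b^2) := by ring
  rw [e]
  have habs : (0:ℝ) ≤ a^2 + b^2 := by positivity
  rw [Real.mul_rpow (by norm_num) habs]
  have e2 : (1:ℝ) + 1 = 2 := by norm_num
  rw [e2]
  have key : (2:ℝ) ^ (p/2) * (2:ℝ) ^ (1 - p/2) = 2 := by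
    rw [← Real.rpow_add (by norm_num : (0:ℝ) < 2)]; norm_num
  calc (2:ℝ) ^ (p/2) * (a^2+b^2) ^ (p/2) * 2 ^ (1 - p/2)
      = (2:ℝ) ^ (p/2) * 2 ^ (1 - p/2) * (a^2+b^2) ^ (p/2) := by ring
    _ = 2 * (a^2+b^2) ^ (p/2) := by rw [key]
    _ ≤ 2 * ((a^2) ^ (p/2) + (b^2) ^ (p/2)) := by
        have := rpow_add_le_add_rpow' (sq_nonneg a) (sq_nonneg b) hw1 (by linarith)
        linarith
    _ = 2 * (|a| ^ p + |b| ^ p) := by rw [sq_rpow_half _ hp0, sq_rpow_half _ hp0]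

set_option maxHeartbeats 1000000 in
/-- The hard scalar core: for conjugate exponents `1 < p < 2 < q`,
`(1+t)^q + (1-t)^q ≤ 2 (1+t^p)^(q-1)` on `[0,1]`. -/
lemma core_t {p q : ℝ} (hp1 : 1 < p) (hp2 : p < 2) (hpq : 1/p + 1/q = 1) :
    ∀ t ∈ Icc (0:ℝ) 1, (1+t)^q + (1-t)^q ≤ 2 * (1 + t^p)^(q-1) := by
  have hp0 : 0 < p := by linarith
  have hq0 : 0 < q := by
    rcases lt_trichotomy q 0 with h | h | h
    · exfalso
      have h1 : 1/q < 0 := by exact div_neg_of_pos_of_neg one_pos h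
      have h2 : 1/p < 1 := by rw [div_lt_one hp0]; linarith
      linarith
    · exfalso; rw [h] at hpq; simp at hpq
      have : 1/p < 1 := by rw [div_lt_one hp0]; linarith
      linarith
    · exact h
  have hpq' : p * q = p + q := by
    field_simp at hpq; linarith
  have hq2 : 2 < q := by nlinarith
  have hkey : p * (q - 1) = q := by nlinarith
  set f : ℝ → ℝ := fun t => 2 * (1 + t^p)^(q-1) - (1+t)^q - (1-t)^q with hf
  suffices hmain : ∀ t ∈ Icc (0:ℝ) 1, 0 ≤ f t by
    intro t ht
    have := hmain t ht
    simp only [hf] at this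
    linarith
  have hcont : ContinuousOn f (Icc 0 1) := by
    apply ContinuousOn.sub
    apply ContinuousOn.sub
    · apply ContinuousOn.mul continuousOn_const
      apply ContinuousOn.rpow_const
      · exact continuousOn_const.add (continuousOn_id.rpow_const (fun x _ => Or.inr hp0.le))
      · intro x hx
        left
        have : (0:ℝ) ≤ x^p := Real.rpow_nonneg hx.1 p
        positivity
    · exact (continuousOn_const.add continuousOn_id).rpow_const (fun x _ => Or.inr hq0.le)
    · exact (continuousOn_const.sub continuousOn_id).rpow_const (fun x _ => Or.inr hq0.le)
  obtain ⟨t₀, ht₀, hmin⟩ := isCompact_Icc.exists_isMinOn (nonempty_Icc.2 zero_le_one) hcont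
  suffices h0 : 0 ≤ f t₀ by
    intro t ht
    exact le_trans h0 (hmin ht)
  rcases eq_or_lt_of_le ht₀.1 with h0l | h0l
  · have hf0 : f 0 = 0 := by
      simp only [hf]
      rw [Real.zero_rpow hp0.ne']
      simp [Real.one_rpow]
      norm_num
    rw [← h0l, hf0]
  rcases eq_or_lt_of_le ht₀.2 with h1r | h1r
  · -- t₀ = 1
    have h2q : (2:ℝ)^q = 2^(q-1) * 2 := by
      rw [← Real.rpow_add_one (by norm_num : (2:ℝ) ≠ 0) (q-1)]
      congr 1; ring
    have hf1 : f 1 = 0 := by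
      simp only [hf]
      rw [Real.one_rpow]
      norm_num
      rw [Real.zero_rpow hq0.ne', h2q]
      ring
    rw [h1r, hf1]
  -- interior case
  have ht0pos : 0 < t₀ := h0l
  have ht0lt1 : t₀ < 1 := h1r
  have h1p : 0 < 1 + t₀ := by linarith
  have h1m : 0 < 1 - t₀ := by linarith
  set x := t₀ ^ p with hx
  have hxpos : 0 < x := Real.rpow_pos_of_pos ht0pos p
  have h1x : 0 < 1 + x := by linarith
  set M := (1 + x) ^ (q - 2) with hM
  have hMpos : 0 < M := Real.rpow_pos_of_pos h1x _
  have d1 : HasDerivAt (fun t : ℝ => t ^ p) (p * t₀ ^ (p-1)) t₀ :=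
    Real.hasDerivAt_rpow_const (Or.inl ht0pos.ne')
  have d2 : HasDerivAt (fun t : ℝ => 1 + t ^ p) (p * t₀ ^ (p-1)) t₀ := d1.const_add 1
  have d3 : HasDerivAt (fun t : ℝ => (1 + t ^ p) ^ (q-1))
      ((p * t₀ ^ (p-1)) * (q-1) * (1 + t₀^p) ^ (q-1-1)) t₀ :=
    d2.rpow_const (Or.inl (by positivity))
  have d4 : HasDerivAt (fun t : ℝ => (1 + t) ^ q) (1 * q * (1+t₀) ^ (q-1)) t₀ := by
    have h := (hasDerivAt_id t₀).const_add (1:ℝ)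
    exact h.rpow_const (Or.inl h1p.ne')
  have d5 : HasDerivAt (fun t : ℝ => (1 - t) ^ q) ((-1) * q * (1-t₀) ^ (q-1)) t₀ := by
    have h : HasDerivAt (fun t : ℝ => 1 - t) (-1) t₀ := (hasDerivAt_id t₀).const_sub 1
    exact h.rpow_const (Or.inl h1m.ne')
  have df : HasDerivAt f
      (2 * ((p * t₀ ^ (p-1)) * (q-1) * (1 + t₀^p) ^ (q-1-1)) - 1 * q * (1+t₀) ^ (q-1)
        - (-1) * q * (1-t₀) ^ (q-1)) t₀ := ((d3.const_mul 2).sub d4).sub d5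
  have hlocal : IsLocalMin f t₀ := hmin.isLocalMin (Icc_mem_nhds h0l h1r)
  have hderiv0 := hlocal.hasDerivAt_eq_zero df
  have hq1 : (0:ℝ) < q - 1 := by linarith
  have e1 : (1 + t₀^p) ^ (q-1-1) = M := by
    rw [hM, hx]
    congr 1; ring
  rw [e1] at hderiv0
  have h2' : q * (2 * t₀^(p-1) * M) = q * ((1+t₀)^(q-1) - (1-t₀)^(q-1)) := by
    linear_combination hderiv0 - 2 * t₀^(p-1) * M * hkey
  have hE : 2 * t₀ ^ (p-1) * M = (1+t₀)^(q-1) - (1-t₀)^(q-1) :=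
    mul_left_cancel₀ hq0.ne' h2'
  set σ := (1+t₀)^(q-1) + (1-t₀)^(q-1) with hσ
  have hA : (0:ℝ) < (1+t₀)^(q-1) := Real.rpow_pos_of_pos h1p _
  have hB : (0:ℝ) < (1-t₀)^(q-1) := Real.rpow_pos_of_pos h1m _
  have hσpos : 0 < σ := by rw [hσ]; positivity
  have idA : (1+x)^(q-1) = (1+x) * M := by
    rw [hM]
    have h : (1+x)^(q-1) = (1+x)^(1:ℝ) * (1+x)^(q-2) := by
      rw [← Real.rpow_add h1x]; congr 1; ring
    rw [h, Real.rpow_one]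
  have idB : (1+t₀)^q = (1+t₀)^(q-1) * (1+t₀) := by
    rw [← Real.rpow_add_one h1p.ne' (q-1)]; congr 1; ring
  have idC : (1-t₀)^q = (1-t₀)^(q-1) * (1-t₀) := by
    rw [← Real.rpow_add_one h1m.ne' (q-1)]; congr 1; ring
  have idT : t₀ * t₀ ^ (p-1) = x := by
    rw [hx]
    have h : t₀ ^ p = t₀^(1:ℝ) * t₀^(p-1) := by
      rw [← Real.rpow_add ht0pos]; congr 1; ring
    rw [h, Real.rpow_one]
  have hSq : (1+t₀)^q + (1-t₀)^q = σ + 2 * M * x := by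
    rw [idB, idC, hσ]
    have expand : (1+t₀)^(q-1) * (1+t₀) + (1-t₀)^(q-1) * (1-t₀)
        = ((1+t₀)^(q-1) + (1-t₀)^(q-1)) + t₀ * ((1+t₀)^(q-1) - (1-t₀)^(q-1)) := by ring
    rw [expand, ← hE]
    linear_combination 2 * M * idT
  have hft₀ : f t₀ = 2 * M - σ := by
    simp only [hf]
    rw [← hx, idA]
    linarith [hSq]
  rw [hft₀]
  by_contra hcon
  push_neg at hcon
  have hσM : 2 * M < σ := by linarith
  set θ : ℝ := 1 / (q-1) with hθ
  have hθpos : 0 < θ := by rw [hθ]; positivity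
  have hθlt : θ < 1 := by
    rw [hθ, div_lt_one hq1]; linarith
  have hθ1 : θ + (1 - θ) = 1 := by ring
  have hexp : θ + q * (1-θ) = q - 1 := by
    rw [hθ]; field_simp; ring
  have hHolder : σ ≤ 2 ^ θ * ((1+t₀)^q + (1-t₀)^q) ^ (1-θ) := by
    have h2 := holder2 hθpos.le (by linarith : (0:ℝ) ≤ 1 - θ) hθ1
      h1p.le (Real.rpow_nonneg h1p.le q) h1m.le (Real.rpow_nonneg h1m.le q)
    have eA : (1+t₀) ^ θ * ((1+t₀)^q) ^ (1-θ) = (1+t₀)^(q-1) := by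
      rw [← Real.rpow_mul h1p.le, ← Real.rpow_add h1p, hexp]
    have eB : (1-t₀) ^ θ * ((1-t₀)^q) ^ (1-θ) = (1-t₀)^(q-1) := by
      rw [← Real.rpow_mul h1m.le, ← Real.rpow_add h1m, hexp]
    rw [eA, eB] at h2
    have eS : (1+t₀) + (1-t₀) = 2 := by ring
    rw [eS] at h2
    exact h2
  have hSlt : (1+t₀)^q + (1-t₀)^q < σ * (1+x) := by
    rw [hSq]; nlinarith
  have hSnn : (0:ℝ) ≤ (1+t₀)^q + (1-t₀)^q := by
    have := Real.rpow_nonneg h1p.le q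
    have := Real.rpow_nonneg h1m.le q
    linarith
  have hmono : ((1+t₀)^q + (1-t₀)^q) ^ (1-θ) < (σ * (1+x)) ^ (1-θ) :=
    Real.rpow_lt_rpow hSnn hSlt (by linarith)
  have h2θpos : (0:ℝ) < 2 ^ θ := Real.rpow_pos_of_pos two_pos θ
  have hchain : σ < 2 ^ θ * (σ * (1+x)) ^ (1-θ) :=
    lt_of_le_of_lt hHolder (by exact mul_lt_mul_of_pos_left hmono h2θpos)
  have hexpand : (σ * (1+x)) ^ (1-θ) = σ ^ (1-θ) * (1+x) ^ (1-θ) :=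
    Real.mul_rpow hσpos.le h1x.le
  have hσsplit : σ = σ ^ θ * σ ^ (1-θ) := by
    rw [← Real.rpow_add hσpos, hθ1, Real.rpow_one]
  have hstep : σ ^ θ * σ ^ (1-θ) < (2 ^ θ * (1+x) ^ (1-θ)) * σ ^ (1-θ) := by
    rw [← hσsplit]
    calc σ < 2 ^ θ * (σ ^ (1-θ) * (1+x) ^ (1-θ)) := by rw [← hexpand]; exact hchain
      _ = (2 ^ θ * (1+x) ^ (1-θ)) * σ ^ (1-θ) := by ring
  have hσ1θpos : (0:ℝ) < σ ^ (1-θ) := Real.rpow_pos_of_pos hσpos _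
  have hθfinal : σ ^ θ < 2 ^ θ * (1+x) ^ (1-θ) :=
    lt_of_mul_lt_mul_right hstep hσ1θpos.le
  have hraise : (σ ^ θ) ^ (q-1) < (2 ^ θ * (1+x) ^ (1-θ)) ^ (q-1) :=
    Real.rpow_lt_rpow (Real.rpow_nonneg hσpos.le _) hθfinal hq1
  have hLHS : (σ ^ θ) ^ (q-1) = σ := by
    rw [← Real.rpow_mul hσpos.le]
    have : θ * (q-1) = 1 := by rw [hθ]; field_simp
    rw [this, Real.rpow_one]
  have hRHS : (2 ^ θ * (1+x) ^ (1-θ)) ^ (q-1) = 2 * M := by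
    rw [Real.mul_rpow (Real.rpow_nonneg (by norm_num) _) (Real.rpow_nonneg h1x.le _)]
    rw [← Real.rpow_mul (by norm_num : (0:ℝ) ≤ 2), ← Real.rpow_mul h1x.le]
    have e1 : θ * (q-1) = 1 := by rw [hθ]; field_simp
    have e2 : (1-θ) * (q-1) = q - 2 := by rw [hθ]; field_simp; ring
    rw [e1, e2, Real.rpow_one, hM]
  rw [hLHS, hRHS] at hraise
  linarith

/-- `x * x^(y-1) = x^y` for `x ≥ 0`, `y > 1`. -/
lemma mul_rpow_sub_one {x y : ℝ} (hx : 0 ≤ x) (hy : 1 < y) : x * x ^ (y - 1) = x ^ y := by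
  rcases eq_or_lt_of_le hx with h | h
  · rw [← h, Real.zero_rpow (by linarith : y - 1 ≠ 0), Real.zero_rpow (by linarith : y ≠ 0),
      mul_zero]
  · nth_rewrite 1 [← Real.rpow_one x]
    rw [← Real.rpow_add h]; congr 1; ring

/-- Homogeneous version of the core inequality. -/
lemma core_le {p q : ℝ} (hp1 : 1 < p) (hp2 : p < 2) (hpq : 1/p + 1/q = 1)
    {A B : ℝ} (hB : 0 ≤ B) (hBA : B ≤ A) :
    (A+B)^q + (A-B)^q ≤ 2 * (A^p + B^p)^(q-1) := by
  have hp0 : 0 < p := by linarith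
  have hq0 : 0 < q := by
    rcases lt_trichotomy q 0 with h | h | h
    · exfalso
      have h1 : 1/q < 0 := div_neg_of_pos_of_neg one_pos h
      have h2 : 1/p < 1 := by rw [div_lt_one hp0]; linarith
      linarith
    · exfalso; rw [h] at hpq; simp at hpq
      have : 1/p < 1 := by rw [div_lt_one hp0]; linarith
      linarith
    · exact h
  have hpq' : p * q = p + q := by field_simp at hpq; linarith
  have hq2 : 2 < q := by nlinarith
  have hkey : p * (q - 1) = q := by nlinarith
  rcases eq_or_lt_of_le (hB.trans hBA) with hA | hA
  · -- A = 0, hence B = 0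
    have hA0 : A = 0 := hA.symm
    have hB0 : B = 0 := le_antisymm (hA0 ▸ hBA) hB
    rw [hA0, hB0]
    rw [Real.zero_rpow hp0.ne']
    norm_num
    rw [Real.zero_rpow hq0.ne', Real.zero_rpow (by linarith : q - 1 ≠ 0)]
    norm_num
  · set t := B / A with ht
    have htmem : t ∈ Icc (0:ℝ) 1 := by
      constructor
      · exact div_nonneg hB hA.le
      · rw [div_le_one hA]; exact hBA
    have hc := core_t hp1 hp2 hpq t htmem
    have e1 : A + B = A * (1 + t) := by rw [ht]; field_simp
    have e2 : A - B = A * (1 - t) := by rw [ht]; field_simp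
    have h1t : (0:ℝ) ≤ 1 + t := by linarith [htmem.1]
    have h1mt : (0:ℝ) ≤ 1 - t := by linarith [htmem.2]
    have e3 : (A+B)^q = A^q * (1+t)^q := by rw [e1, Real.mul_rpow hA.le h1t]
    have e4 : (A-B)^q = A^q * (1-t)^q := by rw [e2, Real.mul_rpow hA.le h1mt]
    have e5 : A^p + B^p = A^p * (1 + t^p) := by
      rw [ht, Real.div_rpow hB hA.le]
      have hAp : A^p ≠ 0 := (Real.rpow_pos_of_pos hA p).ne'
      field_simp
    have e6 : (A^p + B^p)^(q-1) = A^q * (1 + t^p)^(q-1) := by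
      rw [e5, Real.mul_rpow (Real.rpow_nonneg hA.le p) (by positivity : (0:ℝ) ≤ 1 + t^p)]
      congr 1
      rw [← Real.rpow_mul hA.le, hkey]
    calc (A+B)^q + (A-B)^q = A^q * ((1+t)^q + (1-t)^q) := by rw [e3, e4]; ring
      _ ≤ A^q * (2 * (1+t^p)^(q-1)) :=
          mul_le_mul_of_nonneg_left hc (Real.rpow_nonneg hA.le q)
      _ = 2 * (A^p+B^p)^(q-1) := by rw [e6]; ring

set_option maxHeartbeats 2000000 in
/-- The dual (`≥`) form: for conjugate exponents `q < 2 < p`. -/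
lemma scalar_ge {p q : ℝ} (hp2 : 2 < p) (hpq : 1/p + 1/q = 1)
    {a b : ℝ} (hb : 0 ≤ b) (hba : b ≤ a) :
    2 * (a^p + b^p)^(q-1) ≤ (a+b)^q + (a-b)^q := by
  have hp0 : 0 < p := by linarith
  have hp1 : 1 < p := by linarith
  have hq0 : 0 < q := by
    rcases lt_trichotomy q 0 with h | h | h
    · exfalso
      have h1 : 1/q < 0 := div_neg_of_pos_of_neg one_pos h
      have h2 : 1/p < 1 := by rw [div_lt_one hp0]; linarith
      linarith
    · exfalso; rw [h] at hpq; simp at hpq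
      have : 1/p < 1 := by rw [div_lt_one hp0]; linarith
      linarith
    · exact h
  have hpq' : p * q = p + q := by field_simp at hpq; linarith
  have hq1 : 1 < q := by nlinarith
  have hq2 : q < 2 := by nlinarith
  have hqp : 1/q + 1/p = 1 := by linarith
  have hkeyq : q * (p - 1) = p := by nlinarith
  have hkeyp : p * (q - 1) = q := by nlinarith
  have ha : 0 ≤ a := hb.trans hba
  rcases eq_or_lt_of_le ha with hA | hApos
  · -- a = 0 hence b = 0
    have ha0 : a = 0 := hA.symm
    have hb0 : b = 0 := le_antisymm (ha0 ▸ hba) hb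
    rw [ha0, hb0, Real.zero_rpow hp0.ne']
    norm_num
    rw [Real.zero_rpow (by linarith : q - 1 ≠ 0), Real.zero_rpow hq0.ne']
    norm_num
  -- a > 0
  set c := a + b with hc
  set d := a - b with hd
  have hc0 : 0 < c := by rw [hc]; linarith
  have hd0 : 0 ≤ d := by rw [hd]; linarith
  set α := a ^ (p-1) with hα
  set β := b ^ (p-1) with hβ
  have hα0 : 0 < α := Real.rpow_pos_of_pos hApos _
  have hβ0 : 0 ≤ β := Real.rpow_nonneg hb _
  have hβα : β ≤ α := Real.rpow_le_rpow hb hba (by linarith)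
  set D := a^p + b^p with hD
  have hDpos : 0 < D := by
    have := Real.rpow_pos_of_pos hApos p
    have := Real.rpow_nonneg hb p
    rw [hD]; positivity
  -- Step 2 : c*((α+β)/2) + d*((α-β)/2) = D
  have step2 : c * ((α+β)/2) + d * ((α-β)/2) = D := by
    have e1 : a * α = a ^ p := by rw [hα, mul_rpow_sub_one hApos.le hp1]
    have e2 : b * β = b ^ p := by rw [hβ, mul_rpow_sub_one hb hp1]
    rw [hc, hd, hD, ← e1, ← e2]; ring
  -- Step 3 : (λ^p + μ^p) ≤ 2^(1-p) * D^(p-1)  where λ = (α+β)/2 etc.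
  set lam := (α+β)/2 with hlam
  set mu := (α-β)/2 with hmu
  have hlam0 : 0 ≤ lam := by rw [hlam]; positivity
  have hmu0 : 0 ≤ mu := by rw [hmu]; linarith
  have step3 : lam^p + mu^p ≤ 2^(1-p:ℝ) * D^(p-1) := by
    have hcore := core_le hq1 hq2 hqp (by rw [hβ]; positivity) hβα
    -- (α+β)^p + (α-β)^p ≤ 2 * (α^q + β^q)^(p-1)
    have eαq : α^q = a^p := by
      rw [hα, ← Real.rpow_mul ha]
      congr 1; linear_combination hpq'
    have eβq : β^q = b^p := by
      rw [hβ, ← Real.rpow_mul hb]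
      congr 1; linear_combination hpq'
    rw [eαq, eβq, ← hD] at hcore
    have e2p : ((2:ℝ))^p ≠ 0 := (Real.rpow_pos_of_pos two_pos p).ne'
    have elam : lam^p = (α+β)^p / 2^p := by
      rw [hlam, Real.div_rpow (by linarith) (by norm_num)]
    have emu : mu^p = (α-β)^p / 2^p := by
      rw [hmu, Real.div_rpow (by linarith) (by norm_num)]
    rw [elam, emu]
    rw [← add_div, div_le_iff₀ (Real.rpow_pos_of_pos two_pos p)]
    have h2two : (2:ℝ)^(1-p:ℝ) * 2^p = 2 := by
      rw [← Real.rpow_add two_pos]; norm_num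
    calc (α+β)^p + (α-β)^p ≤ 2 * D^(p-1) := hcore
      _ = 2^(1-p:ℝ) * D^(p-1) * 2^p := by
          rw [mul_right_comm ((2:ℝ)^(1-p:ℝ)) (D^(p-1)) ((2:ℝ)^p), h2two]
  -- Step 1 (Hölder) : D = c·lam + d·mu ≤ (c^q+d^q)^(1/q) * (lam^p+mu^p)^(1/p)
  have step1 : D ≤ (c^q + d^q)^(1/q) * (lam^p + mu^p)^(1/p) := by
    have h2 := holder2 (by positivity : (0:ℝ) ≤ 1/q) (by positivity : (0:ℝ) ≤ 1/p)
      (by linarith) (Real.rpow_nonneg hc0.le q) (Real.rpow_nonneg hlam0 p)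
      (Real.rpow_nonneg hd0 q) (Real.rpow_nonneg hmu0 p)
    have ec : (c^q)^(1/q:ℝ) = c := by
      rw [← Real.rpow_mul hc0.le, mul_one_div, div_self hq0.ne', Real.rpow_one]
    have ed : (d^q)^(1/q:ℝ) = d := by
      rw [← Real.rpow_mul hd0, mul_one_div, div_self hq0.ne', Real.rpow_one]
    have el : (lam^p)^(1/p:ℝ) = lam := by
      rw [← Real.rpow_mul hlam0, mul_one_div, div_self hp0.ne', Real.rpow_one]
    have em : (mu^p)^(1/p:ℝ) = mu := by
      rw [← Real.rpow_mul hmu0, mul_one_div, div_self hp0.ne', Real.rpow_one]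
    rw [ec, ed, el, em] at h2
    rw [← step2]
    exact h2
  -- Step 4-6 : conclude
  have hcd0 : (0:ℝ) ≤ c^q + d^q := by
    have := Real.rpow_nonneg hc0.le q
    have := Real.rpow_nonneg hd0 q
    linarith
  have step4 : (lam^p + mu^p)^(1/p:ℝ) ≤ 2^(1/p-1:ℝ) * D^(1/q:ℝ) := by
    have h := Real.rpow_le_rpow (by positivity) step3 (by positivity : (0:ℝ) ≤ 1/p)
    refine h.trans  (le_of_eq ?_)
    rw [Real.mul_rpow (Real.rpow_nonneg (by norm_num) _) (Real.rpow_nonneg hDpos.le _)]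
    rw [← Real.rpow_mul (by norm_num : (0:ℝ) ≤ 2), ← Real.rpow_mul hDpos.le]
    congr 2
    · rw [sub_mul, one_mul, mul_one_div, div_self hp0.ne']
    · rw [sub_mul, mul_one_div, div_self hp0.ne', one_mul]
      linarith [hpq]
  have step5 : D ≤ (c^q + d^q)^(1/q) * (2^(1/p-1:ℝ) * D^(1/q:ℝ)) := by
    refine step1.trans ?_
    exact mul_le_mul_of_nonneg_left step4 (Real.rpow_nonneg hcd0 _)
  have hD1q : (0:ℝ) < D^(1/q:ℝ) := Real.rpow_pos_of_pos hDpos _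
  have step6 : D^(1/p:ℝ) ≤ 2^(1/p-1:ℝ) * (c^q + d^q)^(1/q) := by
    have hsplit : D = D^(1/p:ℝ) * D^(1/q:ℝ) := by
      rw [← Real.rpow_add hDpos]
      rw [show 1/p + 1/q = 1 from hpq, Real.rpow_one]
    have step5' : D^(1/p:ℝ) * D^(1/q:ℝ) ≤ (2^(1/p-1:ℝ) * (c^q + d^q)^(1/q)) * D^(1/q:ℝ) := by
      calc D^(1/p:ℝ) * D^(1/q:ℝ) = D := hsplit.symm
        _ ≤ (c^q + d^q)^(1/q) * (2^(1/p-1:ℝ) * D^(1/q:ℝ)) := step5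
        _ = (2^(1/p-1:ℝ) * (c^q + d^q)^(1/q)) * D^(1/q:ℝ) := by ring
    exact le_of_mul_le_mul_right step5' hD1q
  -- raise to the q-th power
  have step7 := Real.rpow_le_rpow (Real.rpow_nonneg hDpos.le _) step6 hq0.le
  rw [Real.mul_rpow (Real.rpow_nonneg (by norm_num) _) (Real.rpow_nonneg hcd0 _)] at step7
  rw [← Real.rpow_mul hDpos.le, ← Real.rpow_mul (by norm_num : (0:ℝ) ≤ 2),
    ← Real.rpow_mul hcd0] at step7
  have e1 : (1/p) * q = q - 1 := by
    rw [div_mul_eq_mul_div, one_mul, div_eq_iff hp0.ne']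
    linear_combination -hpq'
  have e2 : (1/p - 1) * q = -1 := by
    rw [sub_mul, e1, one_mul]; ring
  have e3 : (1/q) * q = 1 := by field_simp
  rw [e1, e2, e3, Real.rpow_one, Real.rpow_neg_one] at step7
  linarith [step7]


lemma abs_add_sub_pow (q : ℝ) (a b : ℝ) :
    |a+b|^q + |a-b|^q = (|a|+|b|)^q + (|(|a|-|b|)|)^q := by
  rcases le_total 0 a with ha | ha <;> rcases le_total 0 b with hb | hb
  · rw [abs_of_nonneg ha, abs_of_nonneg hb, abs_of_nonneg (add_nonneg ha hb)]
  · rw [abs_of_nonneg ha, abs_of_nonpos hb, show a + -b = a - b by ring,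
      show a - -b = a + b by ring, abs_of_nonneg (by linarith : (0:ℝ) ≤ a - b)]
    exact add_comm _ _
  · rw [abs_of_nonpos ha, abs_of_nonneg hb, abs_of_nonpos (by linarith : a - b ≤ 0),
      show -a - b = -(a+b) by ring, abs_neg, show -(a-b) = -a + b by ring]
    exact add_comm _ _
  · rw [abs_of_nonpos ha, abs_of_nonpos hb, abs_of_nonpos (by linarith : a + b ≤ 0),
      show -a + -b = -(a+b) by ring, show -a - -b = -(a-b) by ring, abs_neg]

lemma scalar_ge_abs {p q : ℝ} (hp2 : 2 < p) (hpq : 1/p + 1/q = 1) (a b : ℝ) :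
    2 * (|a|^p + |b|^p)^(q-1) ≤ |a+b|^q + |a-b|^q := by
  rw [abs_add_sub_pow q a b]
  rcases le_total (|b|) (|a|) with h | h
  · have key := scalar_ge hp2 hpq (abs_nonneg b) h
    rwa [abs_of_nonneg (sub_nonneg.mpr h)]
  · have key := scalar_ge hp2 hpq (abs_nonneg a) h
    rw [abs_of_nonpos (sub_nonpos.mpr h), neg_sub]
    rw [add_comm (|b|) (|a|), add_comm (|b|^p) (|a|^p)] at key
    exact key

variable {p : ℝ}

local notation "E" p => lp (fun _ : ℕ => ℝ) (ENNReal.ofReal p)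

lemma toReal_ofReal' (hp : 1 ≤ p) : (ENNReal.ofReal p).toReal = p :=
  ENNReal.toReal_ofReal (by linarith)

lemma norm_pow_eq (hp : 1 ≤ p) [Fact (1 ≤ ENNReal.ofReal p)] (f : E p) :
    ‖f‖ ^ p = ∑' i, |f i| ^ p := by
  have ht : (ENNReal.ofReal p).toReal = p := toReal_ofReal' hp
  have h0 : 0 < (ENNReal.ofReal p).toReal := by rw [ht]; linarith
  have h := lp.norm_rpow_eq_tsum h0 f
  rw [ht] at h
  simpa [Real.norm_eq_abs] using h

lemma summable_pow (hp : 1 ≤ p) [Fact (1 ≤ ENNReal.ofReal p)] (f : E p) :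
    Summable (fun i => |f i| ^ p) := by
  have ht : (ENNReal.ofReal p).toReal = p := toReal_ofReal' hp
  have h0 : 0 < (ENNReal.ofReal p).toReal := by rw [ht]; linarith
  have h := (lp.memℓp f).summable h0
  rw [ht] at h
  simpa [Real.norm_eq_abs] using h

lemma coe_add (x y : E p) : ∀ i, (x + y) i = x i + y i := by
  intro i; rw [lp.coeFn_add]; rfl

lemma coe_sub (x y : E p) : ∀ i, (x - y) i = x i - y i := by
  intro i; rw [lp.coeFn_sub]; rfl

/-- RIGHT inequality, easy case 1 < p ≤ 2 -/
lemma right_easy (hp1 : 1 < p) (hp2 : p ≤ 2) [Fact (1 ≤ ENNReal.ofReal p)] (x y : E p) :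
    ‖x + y‖ ^ p + ‖x - y‖ ^ p ≤ 2 * (‖x‖ ^ p + ‖y‖ ^ p) := by
  have hp1' : 1 ≤ p := hp1.le
  have S1 : Summable (fun i => |x i + y i| ^ p) := by
    have := summable_pow hp1' (x + y)
    refine this.congr (fun i => ?_)
    rw [coe_add]
  have S2 : Summable (fun i => |x i - y i| ^ p) := by
    have := summable_pow hp1' (x - y)
    refine this.congr (fun i => ?_)
    rw [coe_sub]
  have S3 : Summable (fun i => |x i| ^ p) := summable_pow hp1' x
  have S4 : Summable (fun i => |y i| ^ p) := summable_pow hp1' y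
  have e1 : ‖x + y‖ ^ p = ∑' i, |x i + y i| ^ p := by
    rw [norm_pow_eq hp1']
    exact tsum_congr (fun i => by rw [coe_add])
  have e2 : ‖x - y‖ ^ p = ∑' i, |x i - y i| ^ p := by
    rw [norm_pow_eq hp1']
    exact tsum_congr (fun i => by rw [coe_sub])
  rw [e1, e2, norm_pow_eq hp1' x, norm_pow_eq hp1' y]
  rw [← S1.tsum_add S2, ← S3.tsum_add S4, ← tsum_mul_left]
  exact Summable.tsum_le_tsum (fun i => easy_scalar hp1' hp2 (x i) (y i)) (S1.add S2)
    ((S3.add S4).mul_left 2)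

/-- LEFT inequality, hard case p > 2, with q the conjugate -/
lemma left_hard {q : ℝ} (hp2 : 2 < p) (hpq : 1/p + 1/q = 1)
    [Fact (1 ≤ ENNReal.ofReal p)] (x y : E p) :
    2 ^ (q - 1) * (‖x‖ ^ q + ‖y‖ ^ q) ≤ ‖x + y‖ ^ q + ‖x - y‖ ^ q := by
  have hp0 : 0 < p := by linarith
  have hp1 : 1 ≤ p := by linarith
  have hq0 : 0 < q := by
    rcases lt_trichotomy q 0 with h | h | h
    · exfalso
      have h1 : 1/q < 0 := div_neg_of_pos_of_neg one_pos h
      have h2 : 1/p < 1 := by rw [div_lt_one hp0]; linarith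
      linarith
    · exfalso; rw [h] at hpq; simp at hpq
      have : 1/p < 1 := by rw [div_lt_one hp0]; linarith
      linarith
    · exact h
  have hpq' : p * q = p + q := by field_simp at hpq; linarith
  have hq1 : 1 < q := by nlinarith
  have hq2 : q < 2 := by nlinarith
  set ρ := p / q with hρ
  have hρ1 : 1 < ρ := by
    rw [hρ, lt_div_iff₀ hq0]; linarith
  have hρ0 : 0 < ρ := by linarith
  have hqρ : q * ρ = p := by rw [hρ]; field_simp
  have hq1ρ : (q - 1) * ρ = 1 := by
    rw [hρ]; field_simp; linear_combination hpq'
  haveI instρ : Fact (1 ≤ ENNReal.ofReal ρ) := ⟨ENNReal.one_le_ofReal.mpr hρ1.le⟩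
  have htρ : (ENNReal.ofReal ρ).toReal = ρ := toReal_ofReal' hρ1.le
  have h0ρ : 0 < (ENNReal.ofReal ρ).toReal := by rw [htρ]; linarith
  have conv : ∀ c : ℝ, (|c| ^ q) ^ ρ = |c| ^ p := fun c => by
    rw [← Real.rpow_mul (abs_nonneg c), hqρ]
  have normconv : ∀ c : ℝ, ‖|c| ^ q‖ = |c| ^ q := fun c => by
    rw [Real.norm_eq_abs, abs_of_nonneg (Real.rpow_nonneg (abs_nonneg c) q)]
  have S1 : Summable (fun i => |x i + y i| ^ p) := by
    have := summable_pow hp1 (x + y)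
    exact this.congr (fun i => by rw [coe_add])
  have S2 : Summable (fun i => |x i - y i| ^ p) := by
    have := summable_pow hp1 (x - y)
    exact this.congr (fun i => by rw [coe_sub])
  have hmemA : Memℓp (fun i => |x i + y i| ^ q) (ENNReal.ofReal ρ) := by
    apply memℓp_gen
    rw [htρ]
    refine S1.congr (fun i => ?_)
    rw [normconv, conv]
  have hmemB : Memℓp (fun i => |x i - y i| ^ q) (ENNReal.ofReal ρ) := by
    apply memℓp_gen
    rw [htρ]
    refine S2.congr (fun i => ?_)
    rw [normconv, conv]
  set A : lp (fun _ : ℕ => ℝ) (ENNReal.ofReal ρ) := ⟨fun i => |x i + y i| ^ q, hmemA⟩ with hA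
  set B : lp (fun _ : ℕ => ℝ) (ENNReal.ofReal ρ) := ⟨fun i => |x i - y i| ^ q, hmemB⟩ with hB
  have hAi : ∀ i, A i = |x i + y i| ^ q := fun i => rfl
  have hBi : ∀ i, B i = |x i - y i| ^ q := fun i => rfl
  have e1 : ‖x + y‖ ^ p = ∑' i, |x i + y i| ^ p := by
    rw [norm_pow_eq hp1]
    exact tsum_congr (fun i => by rw [coe_add])
  have e2 : ‖x - y‖ ^ p = ∑' i, |x i - y i| ^ p := by
    rw [norm_pow_eq hp1]
    exact tsum_congr (fun i => by rw [coe_sub])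
  have hp1ρ : p * (1/ρ) = q := by
    rw [hρ]; field_simp
  have nA : ‖A‖ = ‖x + y‖ ^ q := by
    rw [lp.norm_eq_tsum_rpow h0ρ A, htρ]
    have hsum : (∑' i, ‖A i‖ ^ ρ) = ‖x + y‖ ^ p := by
      rw [e1]
      exact tsum_congr (fun i => by rw [hAi, normconv, conv])
    rw [hsum, ← Real.rpow_mul (norm_nonneg _), hp1ρ]
  have nB : ‖B‖ = ‖x - y‖ ^ q := by
    rw [lp.norm_eq_tsum_rpow h0ρ B, htρ]
    have hsum : (∑' i, ‖B i‖ ^ ρ) = ‖x - y‖ ^ p := by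
      rw [e2]
      exact tsum_congr (fun i => by rw [hBi, normconv, conv])
    rw [hsum, ← Real.rpow_mul (norm_nonneg _), hp1ρ]
  have tri : ‖A + B‖ ≤ ‖x + y‖ ^ q + ‖x - y‖ ^ q := by
    rw [← nA, ← nB]; exact norm_add_le A B
  have nAB : ‖A + B‖ ^ ρ = ∑' i, (|x i + y i| ^ q + |x i - y i| ^ q) ^ ρ := by
    rw [norm_pow_eq hρ1.le (A + B)]
    refine tsum_congr (fun i => ?_)
    rw [coe_add, hAi, hBi]
    congr 1
    exact abs_of_nonneg (by positivity)
  have Smaj : Summable (fun i => (|x i + y i| ^ q + |x i - y i| ^ q) ^ ρ) := by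
    have := summable_pow hρ1.le (A + B)
    refine this.congr (fun i => ?_)
    rw [coe_add, hAi, hBi]
    congr 1
    exact abs_of_nonneg (by positivity)
  have S3 : Summable (fun i => |x i| ^ p) := summable_pow hp1 x
  have S4 : Summable (fun i => |y i| ^ p) := summable_pow hp1 y
  have pointwise : ∀ i, 2^ρ * (|x i| ^ p + |y i| ^ p)
      ≤ (|x i + y i| ^ q + |x i - y i| ^ q) ^ ρ := by
    intro i
    have h := scalar_ge_abs hp2 hpq (x i) (y i)
    have hSnn : (0:ℝ) ≤ |x i| ^ p + |y i| ^ p := by positivity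
    have h2 := Real.rpow_le_rpow (by positivity) h hρ0.le
    rw [Real.mul_rpow (by norm_num) (Real.rpow_nonneg hSnn _)] at h2
    rw [← Real.rpow_mul hSnn, hq1ρ, Real.rpow_one] at h2
    exact h2
  have chain1 : 2^ρ * (‖x‖ ^ p + ‖y‖ ^ p) ≤ ‖A + B‖ ^ ρ := by
    rw [norm_pow_eq hp1 x, norm_pow_eq hp1 y, nAB]
    rw [← S3.tsum_add S4, ← tsum_mul_left]
    exact Summable.tsum_le_tsum pointwise ((S3.add S4).mul_left _) Smaj
  set N := ‖x‖ ^ p + ‖y‖ ^ p with hN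
  have hNnn : 0 ≤ N := by
    have := Real.rpow_nonneg (norm_nonneg x) p
    have := Real.rpow_nonneg (norm_nonneg y) p
    rw [hN]; positivity
  set U := ‖x + y‖ ^ q + ‖x - y‖ ^ q with hU
  have hUnn : 0 ≤ U := by
    have := Real.rpow_nonneg (norm_nonneg (x+y)) q
    have := Real.rpow_nonneg (norm_nonneg (x-y)) q
    rw [hU]; positivity
  have chain2 : 2^ρ * N ≤ U ^ ρ := by
    refine chain1.trans ?_
    calc ‖A + B‖ ^ ρ ≤ (‖x + y‖ ^ q + ‖x - y‖ ^ q) ^ ρ :=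
          Real.rpow_le_rpow (norm_nonneg _) tri hρ0.le
      _ = U ^ ρ := by rw [hU]
  have root : 2 * N ^ (1/ρ) ≤ U := by
    have h := Real.rpow_le_rpow (by positivity) chain2 (by positivity : (0:ℝ) ≤ 1/ρ)
    rw [Real.mul_rpow (Real.rpow_nonneg (by norm_num) _) hNnn] at h
    rw [← Real.rpow_mul (by norm_num : (0:ℝ) ≤ 2), mul_one_div, div_self hρ0.ne',
      Real.rpow_one] at h
    rw [← Real.rpow_mul hUnn, mul_one_div, div_self hρ0.ne', Real.rpow_one] at h
    exact h
  have hinvρ : 1/ρ = q/p := by rw [hρ, one_div_div]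
  have hqp1 : q / p = q - 1 := by
    rw [div_eq_iff hp0.ne']; linear_combination -hpq'
  have bridge : ‖x‖ ^ q + ‖y‖ ^ q ≤ N ^ (1/ρ) * 2 ^ (1 - (1/ρ)) := by
    have hqple : (0:ℝ) ≤ q/p := by positivity
    have hqple1 : q/p ≤ 1 := by
      rw [div_le_one hp0]; linarith
    have h2 := holder2 (by positivity : (0:ℝ) ≤ 1/ρ)
      (by rw [hinvρ]; linarith [hqple1] : (0:ℝ) ≤ 1 - 1/ρ) (by ring)
      (Real.rpow_nonneg (norm_nonneg x) p) zero_le_one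
      (Real.rpow_nonneg (norm_nonneg y) p) zero_le_one
    have ex : (‖x‖ ^ p) ^ (1/ρ) * (1:ℝ) ^ (1 - 1/ρ) = ‖x‖ ^ q := by
      rw [Real.one_rpow, mul_one, ← Real.rpow_mul (norm_nonneg x), hp1ρ]
    have ey : (‖y‖ ^ p) ^ (1/ρ) * (1:ℝ) ^ (1 - 1/ρ) = ‖y‖ ^ q := by
      rw [Real.one_rpow, mul_one, ← Real.rpow_mul (norm_nonneg y), hp1ρ]
    rw [ex, ey] at h2
    have e11 : (1:ℝ) + 1 = 2 := by norm_num
    rw [e11] at h2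
    exact h2.trans (le_of_eq (by rw [hN]))
  have final : 2 ^ (q-1) * (‖x‖ ^ q + ‖y‖ ^ q) ≤ 2 * N ^ (1/ρ) := by
    have h := mul_le_mul_of_nonneg_left bridge
      (Real.rpow_nonneg (by norm_num : (0:ℝ) ≤ 2) (q-1))
    refine h.trans (le_of_eq ?_)
    have e : (2:ℝ) ^ (q-1) * 2 ^ (1 - 1/ρ) = 2 := by
      rw [← Real.rpow_add two_pos]
      rw [hinvρ, hqp1]
      norm_num
    calc (2:ℝ)^(q-1) * (N ^ (1/ρ) * 2 ^ (1 - 1/ρ))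
        = (2^(q-1) * 2^(1 - 1/ρ)) * N ^ (1/ρ) := by ring
      _ = 2 * N ^ (1/ρ) := by rw [e]
  exact final.trans root

lemma two_rpow_split (r : ℝ) : (2:ℝ) ^ r = 2 ^ (r-1) * 2 := by
  rw [← Real.rpow_add_one (by norm_num : (2:ℝ) ≠ 0) (r-1)]
  congr 1; ring

lemma norm_two_smul [Fact (1 ≤ ENNReal.ofReal p)]
    (z : lp (fun _ : ℕ => ℝ) (ENNReal.ofReal p)) (r : ℝ) :
    ‖z + z‖ ^ r = 2 ^ r * ‖z‖ ^ r := by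
  have e : z + z = (2:ℝ) • z := (two_smul ℝ z).symm
  rw [e, norm_smul]
  simp only [Real.norm_ofNat]
  exact Real.mul_rpow (by norm_num) (norm_nonneg z)

lemma left_of_right {r : ℝ} [Fact (1 ≤ ENNReal.ofReal p)]
    (H : ∀ u v : lp (fun _ : ℕ => ℝ) (ENNReal.ofReal p),
      ‖u + v‖ ^ r + ‖u - v‖ ^ r ≤ 2 * (‖u‖ ^ r + ‖v‖ ^ r))
    (x y : lp (fun _ : ℕ => ℝ) (ENNReal.ofReal p)) :
    2 ^ (r - 1) * (‖x‖ ^ r + ‖y‖ ^ r) ≤ ‖x + y‖ ^ r + ‖x - y‖ ^ r := by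
  have h := H (x + y) (x - y)
  have e1 : (x + y) + (x - y) = x + x := by abel
  have e2 : (x + y) - (x - y) = y + y := by abel
  rw [e1, e2, norm_two_smul x r, norm_two_smul y r, two_rpow_split r] at h
  linarith

lemma right_of_left {r : ℝ} [Fact (1 ≤ ENNReal.ofReal p)]
    (H : ∀ u v : lp (fun _ : ℕ => ℝ) (ENNReal.ofReal p),
      2 ^ (r - 1) * (‖u‖ ^ r + ‖v‖ ^ r) ≤ ‖u + v‖ ^ r + ‖u - v‖ ^ r)
    (x y : lp (fun _ : ℕ => ℝ) (ENNReal.ofReal p)) :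
    ‖x + y‖ ^ r + ‖x - y‖ ^ r ≤ 2 * (‖x‖ ^ r + ‖y‖ ^ r) := by
  have h := H (x + y) (x - y)
  have e1 : (x + y) + (x - y) = x + x := by abel
  have e2 : (x + y) - (x - y) = y + y := by abel
  rw [e1, e2, norm_two_smul x r, norm_two_smul y r, two_rpow_split r] at h
  have hpos : (0:ℝ) < 2 ^ (r-1) := Real.rpow_pos_of_pos two_pos _
  nlinarith [h, hpos]


end ClarksonAux

open ClarksonAux in
/-- **Clarkson inequality, part 2.** For `1 < p < ∞`, with `p'` the conjugate index of `p`
and `r = min (p, p')`, for all `x, y ∈ ℓ_p`: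
`2^(r-1) (‖x‖^r + ‖y‖^r) ≤ ‖x+y‖^r + ‖x-y‖^r ≤ 2 (‖x‖^r + ‖y‖^r)`. -/
theorem clarkson_inequality_two (p : ℝ) (hp : 1 < p)
    (p' r : ℝ) (hp' : p' = p / (p - 1)) (hr : r = min p p') :
    haveI : Fact ((1 : ℝ≥0∞) ≤ ENNReal.ofReal p) := ⟨ENNReal.one_le_ofReal.mpr hp.le⟩
    ∀ x y : lp (fun _ : ℕ => ℝ) (ENNReal.ofReal p),
      (2 : ℝ) ^ (r - 1) * (‖x‖ ^ r + ‖y‖ ^ r) ≤ ‖x + y‖ ^ r + ‖x - y‖ ^ r ∧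
      ‖x + y‖ ^ r + ‖x - y‖ ^ r ≤ 2 * (‖x‖ ^ r + ‖y‖ ^ r) := by
  haveI : Fact ((1 : ℝ≥0∞) ≤ ENNReal.ofReal p) := ⟨ENNReal.one_le_ofReal.mpr hp.le⟩
  intro x y
  have hp0 : 0 < p := by linarith
  have hp1 : p - 1 ≠ 0 := by intro h; linarith [h]
  have hconj : 1/p + 1/p' = 1 := by
    rw [hp', one_div_div]
    field_simp
    ring
  rcases le_or_gt p 2 with hle | hgt
  · have hrp : r = p := by
      rw [hr, hp']
      apply min_eq_left
      rw [le_div_iff₀ (by linarith : (0:ℝ) < p - 1)]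
      nlinarith
    rw [hrp]
    exact ⟨left_of_right (right_easy hp hle) x y, right_easy hp hle x y⟩
  · have hrq : r = p' := by
      rw [hr, hp']
      apply min_eq_right
      rw [div_le_iff₀ (by linarith : (0:ℝ) < p - 1)]
      nlinarith
    rw [hrq]
    exact ⟨left_hard hgt hconj x y, right_of_left (fun u v => left_hard hgt hconj u v) x y⟩
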